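/- Let Ω(x) be the log-potential of the semicircle law: Ω(x) = x²/4 − 1/2 for |x| ≤ 2, and Ω(x) = x²/4 − 1/2 − [ (|x|/4)√(x²−4) − log(√(x²/4 − 1) + |x|/2) ] for |x| ≥ 2. For p > 2, define Σ_p(u) = (1 + log(p−1))/2 + Ω(u·√(p/(p−1))) − u²/2. Then Σ_p is an even, concave function of u, and there exists a unique positive real E₀(p) with Σ_p(E₀(p)) = 0. -/

import Mathlib

/-- The log-potential of the semicircle law on `[-2,2]`. -/
noncomputable def semicircleLogPotential (x : ℝ) : ℝ :=
  if |x| ≤ 2 then x ^ 2 / 4 - 1 / 2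
  else x ^ 2 / 4 - 1 / 2 -
    (|x| / 4 * Real.sqrt (x ^ 2 - 4) - Real.log (Real.sqrt (x ^ 2 / 4 - 1) + |x| / 2))

/-- The function `Σ_p`. -/
noncomputable def SigmaP (p u : ℝ) : ℝ :=
  (1 + Real.log (p - 1)) / 2 +
    semicircleLogPotential (u * Real.sqrt (p / (p - 1))) - u ^ 2 / 2

namespace SigmaPAux

/-- Closed form for the log potential, valid everywhere. -/
lemma omega_closed (x : ℝ) : semicircleLogPotential x =
    x ^ 2 / 4 - 1 / 2 - (|x| / 4 * Real.sqrt (max (x ^ 2 - 4) 0) -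
      Real.log (Real.sqrt (max (x ^ 2 / 4 - 1) 0) + max (|x| / 2) 1)) := by
  unfold semicircleLogPotential
  rcases le_or_gt |x| 2 with h | h
  · rw [if_pos h]
    have h4 : x ^ 2 ≤ 4 := by nlinarith [sq_abs x, abs_nonneg x]
    rw [max_eq_right (by linarith : x ^ 2 - 4 ≤ 0),
      max_eq_right (by linarith : x ^ 2 / 4 - 1 ≤ 0),
      max_eq_right (by linarith : |x| / 2 ≤ 1)]
    simp
  · rw [if_neg (not_le.2 h)]
    have h4 : 4 ≤ x ^ 2 := by nlinarith [sq_abs x, abs_nonneg x]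
    rw [max_eq_left (by linarith : (0:ℝ) ≤ x ^ 2 - 4),
      max_eq_left (by linarith : (0:ℝ) ≤ x ^ 2 / 4 - 1),
      max_eq_left (by linarith : (1:ℝ) ≤ |x| / 2)]

lemma omega_cont : Continuous semicircleLogPotential := by
  have hfe : semicircleLogPotential = fun x =>
      x ^ 2 / 4 - 1 / 2 - (|x| / 4 * Real.sqrt (max (x ^ 2 - 4) 0) -
        Real.log (Real.sqrt (max (x ^ 2 / 4 - 1) 0) + max (|x| / 2) 1)) :=
    funext omega_closed
  rw [hfe]
  have h1 : Continuous fun x : ℝ => Real.sqrt (max (x ^ 2 - 4) 0) :=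
    Real.continuous_sqrt.comp (((continuous_pow 2).sub continuous_const).max continuous_const)
  have h2 : Continuous fun x : ℝ => Real.sqrt (max (x ^ 2 / 4 - 1) 0) :=
    Real.continuous_sqrt.comp ((((continuous_pow 2).div_const 4).sub continuous_const).max
      continuous_const)
  have h3 : Continuous fun x : ℝ =>
      Real.log (Real.sqrt (max (x ^ 2 / 4 - 1) 0) + max (|x| / 2) 1) := by
    apply Continuous.log
    · exact h2.add ((continuous_abs.div_const 2).max continuous_const)
    · intro x
      have : (1:ℝ) ≤ Real.sqrt (max (x ^ 2 / 4 - 1) 0) + max (|x| / 2) 1 := by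
        have := Real.sqrt_nonneg (max (x ^ 2 / 4 - 1) 0)
        have := le_max_right (|x| / 2) 1
        linarith
      linarith
  exact (((continuous_pow 2).div_const 4).sub continuous_const).sub
    (((continuous_abs.div_const 4).mul h1).sub h3)

lemma sigma_cont (p : ℝ) : Continuous (SigmaP p) := by
  unfold SigmaP
  exact (continuous_const.add (omega_cont.comp (continuous_id.mul continuous_const))).sub
    ((continuous_pow 2).div_const 2)

lemma sigma_even (p u : ℝ) : SigmaP p (-u) = SigmaP p u := by
  unfold SigmaP semicircleLogPotential
  rw [neg_mul]
  simp [abs_neg, neg_sq]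

section

variable {p : ℝ}

lemma hfacts (hp : 2 < p) : 0 < p - 1 ∧ 1 < p / (p - 1) ∧ p / (p - 1) < 2 := by
  have h1 : 0 < p - 1 := by linarith
  refine ⟨h1, ?_, ?_⟩
  · rw [lt_div_iff₀ h1]; linarith
  · rw [div_lt_iff₀ h1]; linarith

lemma sigma_eq_inner (hp : 2 < p) (v : ℝ) (hv : |v * Real.sqrt (p / (p - 1))| ≤ 2) :
    SigmaP p v = (1 + Real.log (p - 1)) / 2 + (p / (p - 1) * v ^ 2 / 4 - 1 / 2) - v ^ 2 / 2 := by
  obtain ⟨h1, h2, h3⟩ := hfacts hp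
  have ht : (0:ℝ) ≤ p / (p - 1) := by positivity
  unfold SigmaP semicircleLogPotential
  rw [if_pos hv, mul_pow, Real.sq_sqrt ht, mul_comm (v ^ 2)]

lemma sigma_eq_outer (hp : 2 < p) (v : ℝ) (hv : 2 < v * Real.sqrt (p / (p - 1))) :
    SigmaP p v = (1 + Real.log (p - 1)) / 2 +
      (p / (p - 1) * v ^ 2 / 4 - 1 / 2 -
        (v * Real.sqrt (p / (p - 1)) / 4 * Real.sqrt (p / (p - 1) * v ^ 2 - 4) -
          Real.log (Real.sqrt (p / (p - 1) * v ^ 2 / 4 - 1) + v * Real.sqrt (p / (p - 1)) / 2)))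
      - v ^ 2 / 2 := by
  obtain ⟨h1, h2, h3⟩ := hfacts hp
  have ht : (0:ℝ) ≤ p / (p - 1) := by positivity
  have habs : |v * Real.sqrt (p / (p - 1))| = v * Real.sqrt (p / (p - 1)) :=
    abs_of_pos (by linarith)
  unfold SigmaP semicircleLogPotential
  rw [if_neg (by rw [habs]; linarith), habs, mul_pow, Real.sq_sqrt ht, mul_comm (v ^ 2)]

/-- derivative of the quadratic (inner) formula -/
lemma hasDeriv_q (p : ℝ) (u : ℝ) :
    HasDerivAt (fun v : ℝ => (1 + Real.log (p - 1)) / 2 +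
      (p / (p - 1) * v ^ 2 / 4 - 1 / 2) - v ^ 2 / 2) ((p / (p - 1) - 2) * u / 2) u := by
  have h2 : HasDerivAt (fun v : ℝ => v ^ 2) (2 * u) u := by
    simpa using hasDerivAt_pow 2 u
  have := (((h2.const_mul (p / (p - 1))).div_const 4).sub_const (1 / 2)).const_add
    ((1 + Real.log (p - 1)) / 2) |>.sub (h2.div_const 2)
  convert this using 1
  rfl
  rfl
  rfl
  ring

lemma hasDeriv_inner (hp : 2 < p) (u : ℝ) (hu : |u * Real.sqrt (p / (p - 1))| < 2) :
    HasDerivAt (SigmaP p) ((p / (p - 1) - 2) * u / 2) u := by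
  apply (hasDeriv_q p u).congr_of_eventuallyEq
  have hopen : IsOpen {v : ℝ | |v * Real.sqrt (p / (p - 1))| < 2} :=
    isOpen_lt (continuous_abs.comp (continuous_id.mul continuous_const)) continuous_const
  filter_upwards [hopen.mem_nhds hu] with v hv
  exact sigma_eq_inner hp v (le_of_lt hv)

/-- derivative of the outer formula -/
lemma hasDeriv_F (hp : 2 < p) (u : ℝ) (hu : 2 < u * Real.sqrt (p / (p - 1))) :
    HasDerivAt (fun v : ℝ => (1 + Real.log (p - 1)) / 2 +
      (p / (p - 1) * v ^ 2 / 4 - 1 / 2 -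
        (v * Real.sqrt (p / (p - 1)) / 4 * Real.sqrt (p / (p - 1) * v ^ 2 - 4) -
          Real.log (Real.sqrt (p / (p - 1) * v ^ 2 / 4 - 1) + v * Real.sqrt (p / (p - 1)) / 2)))
      - v ^ 2 / 2)
      ((p / (p - 1) - 2) * u / 2 -
        Real.sqrt (p / (p - 1)) * Real.sqrt (p / (p - 1) * u ^ 2 - 4) / 2) u := by
  obtain ⟨h1, h2t, h3t⟩ := hfacts hp
  set t := p / (p - 1) with ht_def
  set c := Real.sqrt t with hc_def
  have ht0 : (0:ℝ) < t := by linarith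
  have hc0 : 0 < c := Real.sqrt_pos.2 ht0
  have hc2 : c ^ 2 = t := Real.sq_sqrt (le_of_lt ht0)
  have hu0 : 0 < u := by nlinarith
  have harg : 0 < t * u ^ 2 - 4 := by nlinarith [sq_nonneg (u * c - 2)]
  set s := Real.sqrt (t * u ^ 2 - 4) with hs_def
  have hs0 : 0 < s := Real.sqrt_pos.2 harg
  have hs2 : s ^ 2 = t * u ^ 2 - 4 := Real.sq_sqrt (le_of_lt harg)
  have hhalf : Real.sqrt (t * u ^ 2 / 4 - 1) = s / 2 := by
    have : t * u ^ 2 / 4 - 1 = (s / 2) ^ 2 := by rw [div_pow, hs2]; ring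
    rw [this, Real.sqrt_sq (by positivity)]
  have harg2 : 0 < t * u ^ 2 / 4 - 1 := by linarith
  have h2 : HasDerivAt (fun v : ℝ => v ^ 2) (2 * u) u := by
    simpa using hasDerivAt_pow 2 u
  have hA : HasDerivAt (fun v : ℝ => t * v ^ 2 - 4) (t * (2 * u)) u :=
    (h2.const_mul t).sub_const 4
  have hS : HasDerivAt (fun v : ℝ => Real.sqrt (t * v ^ 2 - 4))
      (t * (2 * u) / (2 * s)) u := hA.sqrt (ne_of_gt harg)
  have hlin : HasDerivAt (fun v : ℝ => v * c / 4) (c / 4) u := by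
    have := ((hasDerivAt_id u).mul_const c).div_const 4
    simpa using this
  have hP : HasDerivAt (fun v : ℝ => v * c / 4 * Real.sqrt (t * v ^ 2 - 4))
      (c / 4 * s + u * c / 4 * (t * (2 * u) / (2 * s))) u := hlin.mul hS
  have hB : HasDerivAt (fun v : ℝ => t * v ^ 2 / 4 - 1) (t * (2 * u) / 4) u :=
    ((h2.const_mul t).div_const 4).sub_const 1
  have hSB : HasDerivAt (fun v : ℝ => Real.sqrt (t * v ^ 2 / 4 - 1))
      (t * (2 * u) / 4 / (2 * (s / 2))) u := by
    have := hB.sqrt (ne_of_gt harg2)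
    rwa [hhalf] at this
  have hlin2 : HasDerivAt (fun v : ℝ => v * c / 2) (c / 2) u := by
    have := ((hasDerivAt_id u).mul_const c).div_const 2
    simpa using this
  have hg : HasDerivAt (fun v : ℝ => Real.sqrt (t * v ^ 2 / 4 - 1) + v * c / 2)
      (t * (2 * u) / 4 / (2 * (s / 2)) + c / 2) u := hSB.add hlin2
  have hgpos : 0 < Real.sqrt (t * u ^ 2 / 4 - 1) + u * c / 2 := by
    have := Real.sqrt_nonneg (t * u ^ 2 / 4 - 1)
    nlinarith
  have hL : HasDerivAt (fun v : ℝ => Real.log (Real.sqrt (t * v ^ 2 / 4 - 1) + v * c / 2))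
      ((t * (2 * u) / 4 / (2 * (s / 2)) + c / 2) /
        (Real.sqrt (t * u ^ 2 / 4 - 1) + u * c / 2)) u := hg.log (ne_of_gt hgpos)
  have hF := ((((h2.const_mul t).div_const 4).sub_const (1 / 2)).sub (hP.sub hL)).const_add
    ((1 + Real.log (p - 1)) / 2) |>.sub (h2.div_const 2)
  convert hF using 1
  rfl
  rfl
  rfl
  rw [hhalf]
  have hden : s / 2 + u * c / 2 ≠ 0 := by positivity
  rw [← hc2]
  have hs2' : s ^ 2 = c ^ 2 * u ^ 2 - 4 := by rw [hc2]; exact hs2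
  field_simp
  ring_nf
  linear_combination (-2 * c * s - 2 * c ^ 2 * u) * hs2'

lemma hasDeriv_outer (hp : 2 < p) (u : ℝ) (hu : 2 < u * Real.sqrt (p / (p - 1))) :
    HasDerivAt (SigmaP p) ((p / (p - 1) - 2) * u / 2 -
      Real.sqrt (p / (p - 1)) * Real.sqrt (p / (p - 1) * u ^ 2 - 4) / 2) u := by
  apply (hasDeriv_F hp u hu).congr_of_eventuallyEq
  have hopen : IsOpen {v : ℝ | 2 < v * Real.sqrt (p / (p - 1))} :=
    isOpen_lt continuous_const (continuous_id.mul continuous_const)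
  filter_upwards [hopen.mem_nhds hu] with v hv
  exact sigma_eq_outer hp v hv

/-- The candidate derivative of `SigmaP p`, globally. -/
noncomputable def Dp (p u : ℝ) : ℝ :=
  (p / (p - 1) - 2) * u / 2 - Real.sqrt (p / (p - 1)) / 2 *
    (if u < 0 then -Real.sqrt (max (p / (p - 1) * u ^ 2 - 4) 0)
     else Real.sqrt (max (p / (p - 1) * u ^ 2 - 4) 0))

lemma hasDeriv_glue (hp : 2 < p) :
    HasDerivAt (SigmaP p) ((p / (p - 1) - 2) * (2 / Real.sqrt (p / (p - 1))) / 2)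
      (2 / Real.sqrt (p / (p - 1))) := by
  obtain ⟨h1, h2t, h3t⟩ := hfacts hp
  set t := p / (p - 1) with ht_def
  set c := Real.sqrt t with hc_def
  have ht0 : (0:ℝ) < t := by linarith
  have hc0 : 0 < c := Real.sqrt_pos.2 ht0
  have hc2 : c ^ 2 = t := Real.sq_sqrt (le_of_lt ht0)
  set a := 2 / c with ha_def
  have ha0 : 0 < a := by positivity
  have hac : a * c = 2 := by rw [ha_def]; field_simp
  have hta : t * a ^ 2 - 4 = 0 := by
    rw [ha_def, div_pow, ← hc2]; field_simp; norm_num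
  -- the two formulas
  set q : ℝ → ℝ := fun v => (1 + Real.log (p - 1)) / 2 + (t * v ^ 2 / 4 - 1 / 2) - v ^ 2 / 2
    with hq_def
  set F : ℝ → ℝ := fun v => (1 + Real.log (p - 1)) / 2 +
      (t * v ^ 2 / 4 - 1 / 2 -
        (v * c / 4 * Real.sqrt (t * v ^ 2 - 4) -
          Real.log (Real.sqrt (t * v ^ 2 / 4 - 1) + v * c / 2))) - v ^ 2 / 2 with hF_def
  set G : ℝ → ℝ := fun v => if v ≤ a then q v else F v with hG_def
  set gD : ℝ → ℝ := fun v => (t - 2) * v / 2 - c / 2 *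
      (if v ≤ a then 0 else Real.sqrt (t * v ^ 2 - 4)) with hgD_def
  -- G agrees with SigmaP on (0, ∞)
  have hGS : ∀ v : ℝ, 0 < v → G v = SigmaP p v := by
    intro v hv
    rcases le_or_gt v a with h | h
    · have hvc : |v * c| ≤ 2 := by
        rw [abs_of_pos (by positivity)]
        calc v * c ≤ a * c := by nlinarith
        _ = 2 := hac
      rw [hG_def]; simp only [if_pos h]
      rw [sigma_eq_inner hp v hvc]
    · have hvc : 2 < v * c := by
        calc (2:ℝ) = a * c := hac.symm
        _ < v * c := by nlinarith
      rw [hG_def]; simp only [if_neg (not_le.2 h)]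
      rw [sigma_eq_outer hp v hvc]
  have hGS' : G =ᶠ[nhds a] SigmaP p := by
    filter_upwards [isOpen_Ioi.mem_nhds (Set.mem_Ioi.2 ha0)] with v hv
    exact hGS v (Set.mem_Ioi.1 hv)
  -- derivative of G away from a
  have hGderiv : ∀ y : ℝ, y ≠ a → HasDerivAt G (gD y) y := by
    intro y hy
    rcases lt_or_gt_of_ne hy with h | h
    · have : G =ᶠ[nhds y] q := by
        filter_upwards [isOpen_Iio.mem_nhds (Set.mem_Iio.2 h)] with v hv
        rw [hG_def]; simp only [if_pos (le_of_lt (Set.mem_Iio.1 hv))]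
      have hq : HasDerivAt q ((t - 2) * y / 2) y := hasDeriv_q p y
      have : HasDerivAt G ((t - 2) * y / 2) y := hq.congr_of_eventuallyEq this
      convert this using 1
      rw [hgD_def]; simp only [if_pos (le_of_lt h)]; ring
    · have hyc : 2 < y * c := by
        calc (2:ℝ) = a * c := hac.symm
        _ < y * c := by nlinarith
      have : G =ᶠ[nhds y] F := by
        filter_upwards [isOpen_Ioi.mem_nhds (Set.mem_Ioi.2 h)] with v hv
        rw [hG_def]; simp only [if_neg (not_le.2 (Set.mem_Ioi.1 hv))]
      have hFd : HasDerivAt F ((t - 2) * y / 2 - c * Real.sqrt (t * y ^ 2 - 4) / 2) y :=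
        hasDeriv_F hp y hyc
      have : HasDerivAt G ((t - 2) * y / 2 - c * Real.sqrt (t * y ^ 2 - 4) / 2) y :=
        hFd.congr_of_eventuallyEq this
      convert this using 1
      rw [hgD_def]; simp only [if_neg (not_le.2 h)]; ring
  -- continuity of G at a
  have hGcont : ContinuousAt G a :=
    ((sigma_cont p).continuousAt).congr hGS'.symm
  -- continuity of gD at a
  have hgDcont : ContinuousAt gD a := by
    have hr : ContinuousAt (fun v : ℝ => if v ≤ a then (0:ℝ)
        else Real.sqrt (t * v ^ 2 - 4)) a := by
      have hra : (if a ≤ a then (0:ℝ) else Real.sqrt (t * a ^ 2 - 4)) = 0 := by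
        simp
      rw [ContinuousAt, hra]
      have hbound : ∀ v : ℝ, (if v ≤ a then (0:ℝ) else Real.sqrt (t * v ^ 2 - 4)) ≤
          Real.sqrt (max (t * v ^ 2 - 4) 0) := by
        intro v
        split
        · positivity
        · exact Real.sqrt_le_sqrt (le_max_left _ _)
      have h0 : ∀ v : ℝ, 0 ≤ (if v ≤ a then (0:ℝ) else Real.sqrt (t * v ^ 2 - 4)) := by
        intro v; split
        · exact le_refl 0
        · exact Real.sqrt_nonneg _
      have hR : Filter.Tendsto (fun v : ℝ => Real.sqrt (max (t * v ^ 2 - 4) 0)) (nhds a)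
          (nhds 0) := by
        have hcont : Continuous fun v : ℝ => Real.sqrt (max (t * v ^ 2 - 4) 0) :=
          Real.continuous_sqrt.comp
            (((continuous_const.mul (continuous_pow 2)).sub continuous_const).max
              continuous_const)
        have h5 := hcont.tendsto a
        simp only [hta] at h5
        simpa using h5
      exact squeeze_zero h0 hbound hR
    have : ContinuousAt (fun v : ℝ => (t - 2) * v / 2) a := by fun_prop
    exact this.sub ((continuousAt_const).mul hr)
  have hG : HasDerivAt G (gD a) a := hasDerivAt_of_hasDerivAt_of_ne hGderiv hGcont hgDcont
  have hSa : HasDerivAt (SigmaP p) (gD a) a := hG.congr_of_eventuallyEq hGS'.symm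
  have : gD a = (t - 2) * a / 2 := by
    rw [hgD_def]; simp
  rw [this] at hSa
  exact hSa

lemma hasDeriv_nonneg (hp : 2 < p) (u : ℝ) (hu : 0 ≤ u) :
    HasDerivAt (SigmaP p) (Dp p u) u := by
  obtain ⟨h1, h2t, h3t⟩ := hfacts hp
  set t := p / (p - 1) with ht_def
  set c := Real.sqrt t with hc_def
  have ht0 : (0:ℝ) < t := by linarith
  have hc0 : 0 < c := Real.sqrt_pos.2 ht0
  have hc2 : c ^ 2 = t := Real.sq_sqrt (le_of_lt ht0)
  have hnneg : ¬ u < 0 := not_lt.2 hu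
  rcases lt_trichotomy u (2 / c) with h | h | h
  · have hcu : u * c < 2 := by
      rw [lt_div_iff₀ hc0] at h; linarith
    have htu : t * u ^ 2 = (u * c) ^ 2 := by rw [mul_pow, hc2]; ring
    have hmax : max (t * u ^ 2 - 4) 0 = 0 := by
      apply max_eq_right
      rw [htu]
      nlinarith [mul_nonneg hu hc0.le]
    have habs : |u * c| < 2 := by
      rw [abs_of_nonneg (by positivity)]
      exact hcu
    have := hasDeriv_inner hp u habs
    convert this using 1
    rw [Dp]; rw [if_neg hnneg, hmax]
    simp
  · subst h
    have := hasDeriv_glue hp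
    convert this using 1
    have hmax : max (t * (2 / c) ^ 2 - 4) 0 = 0 := by
      apply max_eq_right
      rw [div_pow, ← hc2]
      have : c ^ 2 * (2 ^ 2 / c ^ 2) = 4 := by field_simp; norm_num
      nlinarith
    rw [Dp, if_neg hnneg, hmax]
    simp
    exact Or.inl rfl
  · have hvc : 2 < u * c := by
      rw [div_lt_iff₀ hc0] at h; linarith
    have hmax : max (t * u ^ 2 - 4) 0 = t * u ^ 2 - 4 := by
      apply max_eq_left
      nlinarith [sq_nonneg (u * c - 2)]
    have := hasDeriv_outer hp u hvc
    convert this using 1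
    rw [Dp, if_neg hnneg, hmax]
    ring

lemma hasDeriv_all (hp : 2 < p) (u : ℝ) : HasDerivAt (SigmaP p) (Dp p u) u := by
  rcases le_or_gt 0 u with hu | hu
  · exact hasDeriv_nonneg hp u hu
  · have hw : HasDerivAt (SigmaP p) (Dp p (-u)) (-u) :=
      hasDeriv_nonneg hp (-u) (by linarith)
    have hneg : HasDerivAt (fun v : ℝ => SigmaP p (-v)) (Dp p (-u) * (-1)) u :=
      HasDerivAt.comp u hw (hasDerivAt_neg u)
    have heq : (fun v : ℝ => SigmaP p (-v)) = SigmaP p := funext (sigma_even p)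
    rw [heq] at hneg
    convert hneg using 1
    rw [Dp, Dp, if_pos hu, if_neg (by linarith : ¬ -u < 0), neg_sq]
    ring

lemma antitone_Dp (hp : 2 < p) : Antitone (Dp p) := by
  obtain ⟨h1, h2t, h3t⟩ := hfacts hp
  set t := p / (p - 1) with ht_def
  have ht0 : (0:ℝ) < t := by linarith
  have hc0 : 0 < Real.sqrt t := Real.sqrt_pos.2 ht0
  intro u v huv
  rw [Dp, Dp]
  have hlin : (t - 2) * v / 2 ≤ (t - 2) * u / 2 := by nlinarith
  have hmono : (if u < 0 then -Real.sqrt (max (t * u ^ 2 - 4) 0)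
      else Real.sqrt (max (t * u ^ 2 - 4) 0)) ≤
      (if v < 0 then -Real.sqrt (max (t * v ^ 2 - 4) 0)
      else Real.sqrt (max (t * v ^ 2 - 4) 0)) := by
    rcases lt_or_ge v 0 with hv | hv
    · have hu0 : u < 0 := lt_of_le_of_lt huv hv
      rw [if_pos hu0, if_pos hv]
      have : Real.sqrt (max (t * v ^ 2 - 4) 0) ≤ Real.sqrt (max (t * u ^ 2 - 4) 0) := by
        apply Real.sqrt_le_sqrt
        apply max_le_max _ le_rfl
        have hsq : v ^ 2 ≤ u ^ 2 := by nlinarith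
        nlinarith [mul_le_mul_of_nonneg_left hsq (le_of_lt ht0)]
      linarith
    · rcases lt_or_ge u 0 with hu0 | hu0
      · rw [if_pos hu0, if_neg (not_lt.2 hv)]
        have := Real.sqrt_nonneg (max (t * u ^ 2 - 4) 0)
        have := Real.sqrt_nonneg (max (t * v ^ 2 - 4) 0)
        linarith
      · rw [if_neg (not_lt.2 hu0), if_neg (not_lt.2 hv)]
        apply Real.sqrt_le_sqrt
        apply max_le_max _ le_rfl
        have hsq : u ^ 2 ≤ v ^ 2 := by nlinarith
        nlinarith [mul_le_mul_of_nonneg_left hsq (le_of_lt ht0)]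
  have hmul := mul_le_mul_of_nonneg_left hmono
    (by positivity : (0:ℝ) ≤ Real.sqrt t / 2)
  linarith

lemma sigma_zero (hp : 2 < p) : SigmaP p 0 = Real.log (p - 1) / 2 := by
  rw [sigma_eq_inner hp 0 (by simp)]
  ring

lemma sigma_neg (hp : 2 < p) : ∃ u : ℝ, 0 < u ∧ SigmaP p u < 0 := by
  obtain ⟨h1, h2t, h3t⟩ := hfacts hp
  set t := p / (p - 1) with ht_def
  set c := Real.sqrt t with hc_def
  have ht0 : (0:ℝ) < t := by linarith
  have hc0 : 0 < c := Real.sqrt_pos.2 ht0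
  have hc2 : c ^ 2 = t := Real.sq_sqrt (le_of_lt ht0)
  have hcle2 : c ≤ 2 := by nlinarith
  set m := (p - 2) / (p - 1) with hm_def
  have hm0 : 0 < m := by rw [hm_def]; exact div_pos (by linarith) (by linarith)
  set L := Real.log (p - 1) with hL_def
  have hL0 : 0 < L := Real.log_pos (by linarith)
  set u := max (2 / c + 1) (max (16 / m) ((L + 1) / 2)) with hu_def
  have hu1 : 2 / c + 1 ≤ u := le_max_left _ _
  have hu2 : 16 / m ≤ u := le_trans (le_max_left _ _) (le_max_right _ _)
  have hu3 : (L + 1) / 2 ≤ u := le_trans (le_max_right _ _) (le_max_right _ _)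
  have hu0 : 0 < u := by
    have : 0 < 2 / c + 1 := by positivity
    linarith
  have huc : 2 < u * c := by
    have h2c : 2 / c < u := by linarith
    rw [div_lt_iff₀ hc0] at h2c; linarith
  refine ⟨u, hu0, ?_⟩
  rw [sigma_eq_outer hp u huc]
  rw [← ht_def, ← hc_def, ← hL_def]
  have hargpos : 0 < Real.sqrt (t * u ^ 2 / 4 - 1) + u * c / 2 := by
    have := Real.sqrt_nonneg (t * u ^ 2 / 4 - 1)
    nlinarith
  have hsqle : Real.sqrt (t * u ^ 2 / 4 - 1) ≤ u * c / 2 := by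
    have h1' : t * u ^ 2 / 4 - 1 ≤ (u * c / 2) ^ 2 := by
      rw [div_pow, mul_pow, hc2]; nlinarith
    calc Real.sqrt (t * u ^ 2 / 4 - 1) ≤ Real.sqrt ((u * c / 2) ^ 2) :=
          Real.sqrt_le_sqrt h1'
    _ = u * c / 2 := Real.sqrt_sq (by positivity)
  have hlogb : Real.log (Real.sqrt (t * u ^ 2 / 4 - 1) + u * c / 2) ≤ 2 * u - 1 := by
    have := Real.log_le_sub_one_of_pos hargpos
    have hcu : u * c ≤ 2 * u := by nlinarith
    linarith
  have hP : 0 ≤ u * c / 4 * Real.sqrt (t * u ^ 2 - 4) := by positivity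
  have hmu : 16 ≤ m * u := by
    rw [div_le_iff₀ hm0] at hu2; linarith
  have h4u : 4 * u ≤ m * u ^ 2 / 4 := by nlinarith
  have htu : t * u ^ 2 / 4 = u ^ 2 / 2 - m * u ^ 2 / 4 := by
    have hm' : t = 2 - m := by
      rw [ht_def, hm_def]; field_simp; ring
    rw [hm']; ring
  linarith [htu]

end

end SigmaPAux

/-- For `p > 2`, `Σ_p` is even and concave, and has a unique positive zero `E₀(p)`. -/
theorem sigmaP_even_concave_unique_positive_zero (p : ℝ) (hp : 2 < p) :
    (∀ u : ℝ, SigmaP p (-u) = SigmaP p u) ∧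
    ConcaveOn ℝ Set.univ (SigmaP p) ∧
    (∃! E : ℝ, 0 < E ∧ SigmaP p E = 0) := by
  have heven := fun u => SigmaPAux.sigma_even p u
  have hconc : ConcaveOn ℝ Set.univ (SigmaP p) := by
    have hdiff : Differentiable ℝ (SigmaP p) := fun u =>
      (SigmaPAux.hasDeriv_all hp u).differentiableAt
    have hderiv : deriv (SigmaP p) = SigmaPAux.Dp p :=
      funext fun u => (SigmaPAux.hasDeriv_all hp u).deriv
    exact Antitone.concaveOn_univ_of_deriv hdiff (hderiv ▸ SigmaPAux.antitone_Dp hp)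
  refine ⟨heven, hconc, ?_⟩
  have h0 : 0 < SigmaP p 0 := by
    rw [SigmaPAux.sigma_zero hp]
    have := Real.log_pos (by linarith : (1:ℝ) < p - 1)
    linarith
  obtain ⟨u1, hu1pos, hu1neg⟩ := SigmaPAux.sigma_neg hp
  have hcont := (SigmaPAux.sigma_cont p).continuousOn (s := Set.Icc 0 u1)
  have hivt := intermediate_value_Icc' (le_of_lt hu1pos) hcont
  have h0mem : (0:ℝ) ∈ Set.Icc (SigmaP p u1) (SigmaP p 0) := ⟨le_of_lt hu1neg, le_of_lt h0⟩
  obtain ⟨E, hEmem, hEzero⟩ := hivt h0mem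
  have hEpos : 0 < E := by
    rcases eq_or_lt_of_le hEmem.1 with h | h
    · exfalso; rw [← h] at hEzero; rw [hEzero] at h0; exact lt_irrefl 0 h0
    · exact h
  have huniq : ∀ x y : ℝ, 0 < x → SigmaP p x = 0 → 0 < y → SigmaP p y = 0 → x < y → False := by
    intro x y hx hxz hy hyz hxy
    have ha : (0:ℝ) ≤ (y - x) / y := div_nonneg (by linarith) (by linarith)
    have hb : (0:ℝ) ≤ x / y := div_nonneg hx.le hy.le
    have hab : (y - x) / y + x / y = 1 := by field_simp; ring
    have hcon := hconc.2 (Set.mem_univ (0:ℝ)) (Set.mem_univ y) ha hb hab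
    have hxy' : ((y - x) / y) • (0:ℝ) + (x / y) • y = x := by
      simp only [smul_eq_mul, mul_zero, zero_add]
      field_simp
    rw [hxy', hxz, hyz] at hcon
    simp only [smul_eq_mul, mul_zero, add_zero] at hcon
    have hapos : 0 < (y - x) / y := div_pos (by linarith) hy
    nlinarith
  refine ⟨E, ⟨hEpos, hEzero⟩, ?_⟩
  rintro y ⟨hy, hyz⟩
  rcases lt_trichotomy y E with h | h | h
  · exact (huniq y E hy hyz hEpos hEzero h).elim
  · exact h
  · exact (huniq E y hEpos hEzero hy hyz h).elim
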